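/- Let $2 \leq a < b \leq d-2$ be integers with $(3a-1)/2 \leq b < 2a-1$. For $n \geq 0$ define $E_n = \bigcup_{i+j \leq n} [ia + jd, ib + jd] \subseteq \mathbb{Z}$. Then for $n \geq 1$, $E_{n+1} = E_n + \{0, d\}$ if and only if $nb + 1 \geq 2a + d$. -/
import Mathlib


open Pointwise

/-- Key non-coverage lemma: a point `x` satisfying the listed constraints lies in no
interval `[i*a + j*d, i*b + j*d]` with `i ≤ n`. -/
private lemma notcov (a b d x : ℤ) (n : ℕ) (ha : 2 ≤ a) (hab : a < b) (hbd : b ≤ d - 2)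
    (hA : (n : ℤ) * b + 1 ≤ x) (hB : x ≤ 2 * a + d - 1) (hC : x ≠ d) (hC' : x ≠ 2 * d)
    (hD : ¬(a + d ≤ x ∧ x ≤ b + d)) :
    ∀ i j : ℕ, i ≤ n → x ∉ Set.Icc ((i : ℤ) * a + (j : ℤ) * d) ((i : ℤ) * b + (j : ℤ) * d) := by
  intro i j hi hmem
  obtain ⟨h1, h2⟩ := hmem
  have hd : a + 3 ≤ d := by linarith
  have hia : (0 : ℤ) ≤ (i : ℤ) * a := mul_nonneg (by positivity) (by linarith)
  have hin : (i : ℤ) ≤ (n : ℤ) := by exact_mod_cast hi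
  match j with
  | 0 =>
    have hib : (i : ℤ) * b ≤ (n : ℤ) * b := mul_le_mul_of_nonneg_right hin (by linarith)
    push_cast at h2
    linarith
  | 1 =>
    match i with
    | 0 => push_cast at h1 h2; exact hC (by linarith)
    | 1 => push_cast at h1 h2; exact hD ⟨by linarith, by linarith⟩
    | (i + 2) =>
      push_cast at h1
      have h0 : (0 : ℤ) ≤ (i : ℤ) * a := mul_nonneg (by positivity) (by linarith)
      nlinarith
  | 2 =>
    match i with
    | 0 => push_cast at h1 h2; exact hC' (by linarith)
    | (i + 1) =>
      push_cast at h1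
      have h0 : (0 : ℤ) ≤ (i : ℤ) * a := mul_nonneg (by positivity) (by linarith)
      nlinarith
  | (j + 3) =>
    push_cast at h1
    have h0 : (0 : ℤ) ≤ (j : ℤ) * d := mul_nonneg (by positivity) (by linarith)
    nlinarith

/-- Coverage of `[2a, nb]` by the intervals `[ia, ib]`, `2 ≤ i ≤ n`. -/
private lemma memE (a b : ℤ) (n : ℕ) (x : ℤ) (ha : 2 ≤ a) (hab : a < b)
    (hb1 : 3 * a - 1 ≤ 2 * b) (hn : 2 ≤ n) (h1 : 2 * a ≤ x) (h2 : x ≤ (n : ℤ) * b) :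
    ∃ i : ℕ, i ≤ n ∧ (i : ℤ) * a ≤ x ∧ x ≤ (i : ℤ) * b := by
  have ha0 : (0 : ℤ) < a := by linarith
  set m : ℤ := x / a with hm
  have hdm : a * m + x % a = x := Int.mul_ediv_add_emod x a
  have hr0 : 0 ≤ x % a := Int.emod_nonneg x (by linarith)
  have hra : x % a < a := Int.emod_lt_of_pos x ha0
  have ham : a * m ≤ x := by linarith
  have hxam : x < a * m + a := by linarith
  have hm2 : 2 ≤ m := by
    by_contra h
    push_neg at h
    have : m ≤ 1 := by linarith
    have : a * m ≤ a * 1 := mul_le_mul_of_nonneg_left this (by linarith)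
    linarith
  by_cases hmn : m ≤ (n : ℤ)
  · refine ⟨m.toNat, ?_, ?_, ?_⟩
    · have : (m.toNat : ℤ) ≤ (n : ℤ) := by rwa [Int.toNat_of_nonneg (by linarith)]
      exact_mod_cast this
    · rw [Int.toNat_of_nonneg (by linarith : (0:ℤ) ≤ m)]; linarith
    · rw [Int.toNat_of_nonneg (by linarith : (0:ℤ) ≤ m)]
      have hba : 2 * (b - a) ≤ m * (b - a) :=
        mul_le_mul_of_nonneg_right hm2 (by linarith)
      nlinarith
  · refine ⟨n, ?_, ?_, h2⟩
    · exact le_rfl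
    · push_neg at hmn
      have hnm : (n : ℤ) + 1 ≤ m := by linarith
      have : a * ((n : ℤ) + 1) ≤ a * m := mul_le_mul_of_nonneg_left hnm (by linarith)
      nlinarith

/-- Case B with `(3a-1)/2 ≤ b < 2a-1`: for `2 ≤ a < b ≤ d-2` and
`E n = ⋃_{i+j ≤ n} [ia+jd, ib+jd]`, one has `E (n+1) = E n + {0, d}` iff
`nb + 1 ≥ 2a + d`, for `n ≥ 1`. -/
theorem caseB2_iff (a b d : ℤ) (ha : 2 ≤ a) (hab : a < b) (hbd : b ≤ d - 2)
    (hb1 : 3 * a - 1 ≤ 2 * b) (hb2 : b < 2 * a - 1)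
    (E : ℕ → Set ℤ)
    (hE : ∀ n : ℕ, E n = ⋃ i : ℕ, ⋃ j : ℕ, ⋃ (_ : i + j ≤ n),
        Set.Icc ((i : ℤ) * a + (j : ℤ) * d) ((i : ℤ) * b + (j : ℤ) * d)) :
    ∀ n : ℕ, 1 ≤ n →
      (E (n + 1) = E n + ({0, d} : Set ℤ) ↔ (n : ℤ) * b + 1 ≥ 2 * a + d) := by
  intro n hn
  have hd : a + 3 ≤ d := by linarith
  have hdmem : d ∈ ({0, d} : Set ℤ) := by simp
  have h0mem : (0 : ℤ) ∈ ({0, d} : Set ℤ) := by simp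
  constructor
  · -- equality → condition, by contraposition via an uncovered witness
    intro heq
    by_contra hc
    push_neg at hc
    have hc' : (n : ℤ) * b + 1 ≤ 2 * a + d - 1 := by linarith
    -- produce a witness
    obtain ⟨x, hA, hB, hC, hC', hD, hE1, hE2⟩ :
        ∃ x : ℤ, (n : ℤ) * b + 1 ≤ x ∧ x ≤ 2 * a + d - 1 ∧ x ≠ d ∧ x ≠ 2 * d ∧
          ¬(a + d ≤ x ∧ x ≤ b + d) ∧ ((n : ℤ) + 1) * a ≤ x ∧ x ≤ ((n : ℤ) + 1) * b := by
      rcases (by omega : n = 1 ∨ 2 ≤ n) with h1 | h2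
      · subst h1
        push_cast at hc' ⊢
        by_cases h2ad : 2 * a = d
        · exact ⟨2 * a + 1, by omega, by omega, by omega, by omega, by omega, by omega, by omega⟩
        · exact ⟨2 * a, by omega, by omega, by omega, by omega, by omega, by omega, by omega⟩
      · have hn2 : (2 : ℤ) ≤ (n : ℤ) := by exact_mod_cast h2
        have hba : 2 * (b - a) ≤ (n : ℤ) * (b - a) :=
          mul_le_mul_of_nonneg_right hn2 (by linarith)
        have hkey : ((n : ℤ) + 1) * a ≤ (n : ℤ) * b + 1 := by nlinarith
        have hnb : 3 * b ≤ (n : ℤ) * b ∨ (n : ℤ) = 2 := by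
          rcases (by omega : 3 ≤ n ∨ n = 2) with h3 | h3
          · left
            exact mul_le_mul_of_nonneg_right (by exact_mod_cast h3) (by linarith)
          · right; exact_mod_cast h3
        by_cases hxd : (n : ℤ) * b + 1 = d
        · refine ⟨d + 1, by linarith, by linarith, by omega, by linarith, by omega,
            by linarith, ?_⟩
          have : ((n : ℤ) + 1) * b = (n : ℤ) * b + b := by ring
          linarith
        · by_cases hxI : a + d ≤ (n : ℤ) * b + 1 ∧ (n : ℤ) * b + 1 ≤ b + d
          · obtain ⟨hI1, hI2⟩ := hxI
            refine ⟨b + d + 1, by linarith, by linarith, by omega, by omega,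
              by omega, by linarith, ?_⟩
            have : ((n : ℤ) + 1) * b = (n : ℤ) * b + b := by ring
            linarith
          · refine ⟨(n : ℤ) * b + 1, le_rfl, hc', hxd, ?_, hxI, hkey, by nlinarith⟩
            intro h2d
            have hd2a : d ≤ 2 * a - 1 := by linarith
            rcases hnb with h3 | h3
            · linarith
            · rw [h3] at h2d; omega
    -- the witness is in `E (n+1)`
    have hx1 : x ∈ E (n + 1) := by
      rw [hE]
      refine Set.mem_iUnion.2 ⟨n + 1, Set.mem_iUnion.2 ⟨0,
        Set.mem_iUnion.2 ⟨by omega, Set.mem_Icc.2 ⟨?_, ?_⟩⟩⟩⟩ <;> push_cast <;> linarith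
    rw [heq, Set.mem_add] at hx1
    obtain ⟨e, he, s, hs, hes⟩ := hx1
    rw [hE] at he
    simp only [Set.mem_iUnion] at he
    obtain ⟨i, j, hij, hmem⟩ := he
    obtain ⟨h1, h2⟩ := hmem
    simp only [Set.mem_insert_iff, Set.mem_singleton_iff] at hs
    rcases hs with rfl | hsd
    · exact notcov a b d x n ha hab hbd hA hB hC hC' hD i j (by omega)
        (Set.mem_Icc.2 ⟨by linarith, by linarith⟩)
    · rw [hsd] at hes
      refine notcov a b d x n ha hab hbd hA hB hC hC' hD i (j + 1) (by omega)
        (Set.mem_Icc.2 ⟨?_, ?_⟩) <;> push_cast <;> linarith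
  · -- condition → equality
    intro hcond
    have hn2 : 2 ≤ n := by
      by_contra h
      have hn1 : n = 1 := by omega
      subst hn1
      push_cast at hcond
      linarith
    have hn2' : (2 : ℤ) ≤ (n : ℤ) := by exact_mod_cast hn2
    apply Set.Subset.antisymm
    · -- E (n+1) ⊆ E n + {0, d}
      intro x hx
      rw [hE] at hx
      simp only [Set.mem_iUnion] at hx
      obtain ⟨i, j, hij, hmem⟩ := hx
      obtain ⟨h1, h2⟩ := hmem
      match j with
      | (j + 1) =>
        have he : x - d ∈ E n := by
          rw [hE]
          refine Set.mem_iUnion.2 ⟨i, Set.mem_iUnion.2 ⟨j,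
            Set.mem_iUnion.2 ⟨by omega, Set.mem_Icc.2 ⟨?_, ?_⟩⟩⟩⟩ <;>
            push_cast at h1 h2 ⊢ <;> linarith
        have : x = (x - d) + d := by ring
        rw [this]
        exact Set.add_mem_add he hdmem
      | 0 =>
        push_cast at h1 h2
        rcases (by omega : i ≤ n ∨ i = n + 1) with hi | hi
        · have he : x ∈ E n := by
            rw [hE]
            exact Set.mem_iUnion.2 ⟨i, Set.mem_iUnion.2 ⟨0,
              Set.mem_iUnion.2 ⟨by omega, Set.mem_Icc.2 ⟨by push_cast; linarith,
                by push_cast; linarith⟩⟩⟩⟩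
          have : x = x + 0 := by ring
          rw [this]
          exact Set.add_mem_add he h0mem
        · subst hi
          push_cast at h1 h2
          by_cases hxnb : x ≤ (n : ℤ) * b
          · have h3a : 3 * a ≤ ((n : ℤ) + 1) * a :=
              mul_le_mul_of_nonneg_right (by linarith) (by linarith)
            obtain ⟨i', hi', hl, hr⟩ := memE a b n x ha hab hb1 hn2 (by linarith) hxnb
            have he : x ∈ E n := by
              rw [hE]
              exact Set.mem_iUnion.2 ⟨i', Set.mem_iUnion.2 ⟨0,
                Set.mem_iUnion.2 ⟨by omega, Set.mem_Icc.2 ⟨by push_cast; linarith,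
                  by push_cast; linarith⟩⟩⟩⟩
            have : x = x + 0 := by ring
            rw [this]
            exact Set.add_mem_add he h0mem
          · push_neg at hxnb
            have hub : x - d ≤ (n : ℤ) * b := by nlinarith
            obtain ⟨i', hi', hl, hr⟩ := memE a b n (x - d) ha hab hb1 hn2
              (by linarith) hub
            have he : x - d ∈ E n := by
              rw [hE]
              exact Set.mem_iUnion.2 ⟨i', Set.mem_iUnion.2 ⟨0,
                Set.mem_iUnion.2 ⟨by omega, Set.mem_Icc.2 ⟨by push_cast; linarith,
                  by push_cast; linarith⟩⟩⟩⟩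
            have : x = (x - d) + d := by ring
            rw [this]
            exact Set.add_mem_add he hdmem
    · -- E n + {0, d} ⊆ E (n+1)
      intro x hx
      rw [Set.mem_add] at hx
      obtain ⟨e, he, s, hs, hes⟩ := hx
      rw [hE] at he
      simp only [Set.mem_iUnion] at he
      obtain ⟨i, j, hij, hmem⟩ := he
      obtain ⟨h1, h2⟩ := hmem
      simp only [Set.mem_insert_iff, Set.mem_singleton_iff] at hs
      rw [hE]
      rcases hs with rfl | hsd
      · exact Set.mem_iUnion.2 ⟨i, Set.mem_iUnion.2 ⟨j,
          Set.mem_iUnion.2 ⟨by omega, Set.mem_Icc.2 ⟨by linarith [hes],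
            by linarith [hes]⟩⟩⟩⟩
      · rw [hsd] at hes
        refine Set.mem_iUnion.2 ⟨i, Set.mem_iUnion.2 ⟨j + 1,
          Set.mem_iUnion.2 ⟨by omega, Set.mem_Icc.2 ⟨?_, ?_⟩⟩⟩⟩ <;>
          push_cast <;> linarith [hes]
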